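/- arXiv:1812.04573 — 3 statements merged into one kernel-verified Lean document; each statement's English description precedes it below -/
import Mathlib

section
/- As formal power series (or for |x_i| < 1), the following identity holds: Σ_{σ ∈ S_3} 1/((1 - x_{σ(1)})(1 - x_{σ(1)} x_{σ(2)})(1 - x_{σ(1)} x_{σ(2)} x_{σ(3)})) = 2/(1 - x_1 x_2 x_3) + 1/((1-x_1 x_2)(1-x_3)) + 1/((1-x_1 x_3)(1-x_2)) + 1/((1-x_2 x_3)(1-x_1)) + 1/((1-x_1)(1-x_2)(1-x_3)). -/
set_option maxHeartbeats 1000000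

theorem macmahon_multivariate_k3 (x : Fin 3 → ℝ) (hx : ∀ i, |x i| < 1) :
    ∑ σ : Equiv.Perm (Fin 3),
        1 / ((1 - x (σ 0)) * (1 - x (σ 0) * x (σ 1)) * (1 - x (σ 0) * x (σ 1) * x (σ 2))) =
      2 / (1 - x 0 * x 1 * x 2)
        + 1 / ((1 - x 0 * x 1) * (1 - x 2))
        + 1 / ((1 - x 0 * x 2) * (1 - x 1))
        + 1 / ((1 - x 1 * x 2) * (1 - x 0))
        + 1 / ((1 - x 0) * (1 - x 1) * (1 - x 2)) := by
  have h1 : ∀ i : Fin 3, 1 - x i ≠ 0 := fun i => by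
    have := (abs_lt.mp (hx i)).2; linarith
  have h2 : ∀ i j : Fin 3, 1 - x i * x j ≠ 0 := fun i j => by
    have habs : |x i * x j| < 1 := by
      rw [abs_mul]
      nlinarith [abs_nonneg (x i), abs_nonneg (x j), hx i, hx j]
    have h := (abs_lt.mp habs).2; linarith
  have h3 : 1 - x 0 * x 1 * x 2 ≠ 0 := by
    have habs : |x 0 * x 1 * x 2| < 1 := by
      rw [abs_mul, abs_mul]
      nlinarith [abs_nonneg (x 0), abs_nonneg (x 1), abs_nonneg (x 2), hx 0, hx 1, hx 2,
        mul_nonneg (abs_nonneg (x 0)) (abs_nonneg (x 1))]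
    have h := (abs_lt.mp habs).2; linarith
  have c102 : 1 - x 1 * x 0 * x 2 ≠ 0 := by
    rw [show x 1 * x 0 * x 2 = x 0 * x 1 * x 2 by ring]; exact h3
  have c210 : 1 - x 2 * x 1 * x 0 ≠ 0 := by
    rw [show x 2 * x 1 * x 0 = x 0 * x 1 * x 2 by ring]; exact h3
  have c021 : 1 - x 0 * x 2 * x 1 ≠ 0 := by
    rw [show x 0 * x 2 * x 1 = x 0 * x 1 * x 2 by ring]; exact h3
  have c120 : 1 - x 1 * x 2 * x 0 ≠ 0 := by
    rw [show x 1 * x 2 * x 0 = x 0 * x 1 * x 2 by ring]; exact h3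
  have c201 : 1 - x 2 * x 0 * x 1 ≠ 0 := by
    rw [show x 2 * x 0 * x 1 = x 0 * x 1 * x 2 by ring]; exact h3
  have huniv : (Finset.univ : Finset (Equiv.Perm (Fin 3))) =
      {1, Equiv.swap 0 1, Equiv.swap 0 2, Equiv.swap 1 2,
        Equiv.swap 0 1 * Equiv.swap 1 2, Equiv.swap 1 2 * Equiv.swap 0 1} := by decide
  rw [huniv]
  rw [Finset.sum_insert (by decide), Finset.sum_insert (by decide),
      Finset.sum_insert (by decide), Finset.sum_insert (by decide),
      Finset.sum_insert (by decide), Finset.sum_singleton]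
  simp only [Equiv.Perm.coe_mul, Function.comp_apply, Equiv.Perm.one_apply,
      show (Equiv.swap (0:Fin 3) 1) 0 = 1 from by decide,
      show (Equiv.swap (0:Fin 3) 1) 1 = 0 from by decide,
      show (Equiv.swap (0:Fin 3) 1) 2 = 2 from by decide,
      show (Equiv.swap (0:Fin 3) 2) 0 = 2 from by decide,
      show (Equiv.swap (0:Fin 3) 2) 1 = 1 from by decide,
      show (Equiv.swap (0:Fin 3) 2) 2 = 0 from by decide,
      show (Equiv.swap (1:Fin 3) 2) 0 = 0 from by decide,
      show (Equiv.swap (1:Fin 3) 2) 1 = 2 from by decide,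
      show (Equiv.swap (1:Fin 3) 2) 2 = 1 from by decide]
  have hP : (1 - x 0) * (1 - x 1) * (1 - x 2) * (1 - x 0 * x 1) * (1 - x 0 * x 2) * (1 - x 1 * x 2) * (1 - x 0 * x 1 * x 2) ≠ 0 := by
    exact mul_ne_zero (mul_ne_zero (mul_ne_zero (mul_ne_zero (mul_ne_zero (mul_ne_zero (h1 0) (h1 1)) (h1 2)) (h2 0 1)) (h2 0 2)) (h2 1 2)) h3
  have e0 : 1 / ((1 - x 0) * (1 - x 0 * x 1) * (1 - x 0 * x 1 * x 2)) = ((1 - x 1) * (1 - x 2) * (1 - x 0 * x 2) * (1 - x 1 * x 2)) / ((1 - x 0) * (1 - x 1) * (1 - x 2) * (1 - x 0 * x 1) * (1 - x 0 * x 2) * (1 - x 1 * x 2) * (1 - x 0 * x 1 * x 2)) := by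
    rw [div_eq_div_iff (mul_ne_zero (mul_ne_zero (h1 0) (h2 0 1)) h3) hP]; ring
  have e1 : 1 / ((1 - x 1) * (1 - x 1 * x 0) * (1 - x 1 * x 0 * x 2)) = ((1 - x 0) * (1 - x 2) * (1 - x 0 * x 2) * (1 - x 1 * x 2)) / ((1 - x 0) * (1 - x 1) * (1 - x 2) * (1 - x 0 * x 1) * (1 - x 0 * x 2) * (1 - x 1 * x 2) * (1 - x 0 * x 1 * x 2)) := by
    rw [div_eq_div_iff (mul_ne_zero (mul_ne_zero (h1 1) (h2 1 0)) c102) hP]; ring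
  have e2 : 1 / ((1 - x 2) * (1 - x 2 * x 1) * (1 - x 2 * x 1 * x 0)) = ((1 - x 0) * (1 - x 1) * (1 - x 0 * x 1) * (1 - x 0 * x 2)) / ((1 - x 0) * (1 - x 1) * (1 - x 2) * (1 - x 0 * x 1) * (1 - x 0 * x 2) * (1 - x 1 * x 2) * (1 - x 0 * x 1 * x 2)) := by
    rw [div_eq_div_iff (mul_ne_zero (mul_ne_zero (h1 2) (h2 2 1)) c210) hP]; ring
  have e3 : 1 / ((1 - x 0) * (1 - x 0 * x 2) * (1 - x 0 * x 2 * x 1)) = ((1 - x 1) * (1 - x 2) * (1 - x 0 * x 1) * (1 - x 1 * x 2)) / ((1 - x 0) * (1 - x 1) * (1 - x 2) * (1 - x 0 * x 1) * (1 - x 0 * x 2) * (1 - x 1 * x 2) * (1 - x 0 * x 1 * x 2)) := by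
    rw [div_eq_div_iff (mul_ne_zero (mul_ne_zero (h1 0) (h2 0 2)) c021) hP]; ring
  have e4 : 1 / ((1 - x 1) * (1 - x 1 * x 2) * (1 - x 1 * x 2 * x 0)) = ((1 - x 0) * (1 - x 2) * (1 - x 0 * x 1) * (1 - x 0 * x 2)) / ((1 - x 0) * (1 - x 1) * (1 - x 2) * (1 - x 0 * x 1) * (1 - x 0 * x 2) * (1 - x 1 * x 2) * (1 - x 0 * x 1 * x 2)) := by
    rw [div_eq_div_iff (mul_ne_zero (mul_ne_zero (h1 1) (h2 1 2)) c120) hP]; ring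
  have e5 : 1 / ((1 - x 2) * (1 - x 2 * x 0) * (1 - x 2 * x 0 * x 1)) = ((1 - x 0) * (1 - x 1) * (1 - x 0 * x 1) * (1 - x 1 * x 2)) / ((1 - x 0) * (1 - x 1) * (1 - x 2) * (1 - x 0 * x 1) * (1 - x 0 * x 2) * (1 - x 1 * x 2) * (1 - x 0 * x 1 * x 2)) := by
    rw [div_eq_div_iff (mul_ne_zero (mul_ne_zero (h1 2) (h2 2 0)) c201) hP]; ring
  have f0 : 2 / (1 - x 0 * x 1 * x 2) = (2 * ((1 - x 0) * (1 - x 1) * (1 - x 2) * (1 - x 0 * x 1) * (1 - x 0 * x 2) * (1 - x 1 * x 2))) / ((1 - x 0) * (1 - x 1) * (1 - x 2) * (1 - x 0 * x 1) * (1 - x 0 * x 2) * (1 - x 1 * x 2) * (1 - x 0 * x 1 * x 2)) := by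
    rw [div_eq_div_iff h3 hP]; ring
  have f1 : 1 / ((1 - x 0 * x 1) * (1 - x 2)) = ((1 - x 0) * (1 - x 1) * (1 - x 0 * x 2) * (1 - x 1 * x 2) * (1 - x 0 * x 1 * x 2)) / ((1 - x 0) * (1 - x 1) * (1 - x 2) * (1 - x 0 * x 1) * (1 - x 0 * x 2) * (1 - x 1 * x 2) * (1 - x 0 * x 1 * x 2)) := by
    rw [div_eq_div_iff (mul_ne_zero (h2 0 1) (h1 2)) hP]; ring
  have f2 : 1 / ((1 - x 0 * x 2) * (1 - x 1)) = ((1 - x 0) * (1 - x 2) * (1 - x 0 * x 1) * (1 - x 1 * x 2) * (1 - x 0 * x 1 * x 2)) / ((1 - x 0) * (1 - x 1) * (1 - x 2) * (1 - x 0 * x 1) * (1 - x 0 * x 2) * (1 - x 1 * x 2) * (1 - x 0 * x 1 * x 2)) := by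
    rw [div_eq_div_iff (mul_ne_zero (h2 0 2) (h1 1)) hP]; ring
  have f3 : 1 / ((1 - x 1 * x 2) * (1 - x 0)) = ((1 - x 1) * (1 - x 2) * (1 - x 0 * x 1) * (1 - x 0 * x 2) * (1 - x 0 * x 1 * x 2)) / ((1 - x 0) * (1 - x 1) * (1 - x 2) * (1 - x 0 * x 1) * (1 - x 0 * x 2) * (1 - x 1 * x 2) * (1 - x 0 * x 1 * x 2)) := by
    rw [div_eq_div_iff (mul_ne_zero (h2 1 2) (h1 0)) hP]; ring
  have f4 : 1 / ((1 - x 0) * (1 - x 1) * (1 - x 2)) = ((1 - x 0 * x 1) * (1 - x 0 * x 2) * (1 - x 1 * x 2) * (1 - x 0 * x 1 * x 2)) / ((1 - x 0) * (1 - x 1) * (1 - x 2) * (1 - x 0 * x 1) * (1 - x 0 * x 2) * (1 - x 1 * x 2) * (1 - x 0 * x 1 * x 2)) := by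
    rw [div_eq_div_iff (mul_ne_zero (mul_ne_zero (h1 0) (h1 1)) (h1 2)) hP]; ring
  rw [e0, e1, e2, e3, e4, e5, f0, f1, f2, f3, f4]
  simp only [← add_div]
  congr 1
  ring
end

section
/- As formal power series in x_1, ..., x_k, Σ_{σ ∈ S_k} σ(1/((1-x_1)(1-x_1x_2)···(1-x_1x_2···x_k))) = Σ over all k-tuples γ ∈ ℕ^k of (∏_{j≥0} f_j(γ)!)·x_1^{γ_1}···x_k^{γ_k}, where f_j(γ) is the number of entries of γ equal to j; i.e., the coefficient of x_1^{γ_1}···x_k^{γ_k} in the symmetrized sum is ∏_j f_j(γ)!. -/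
open MvPowerSeries Finset

variable {k : ℕ}

lemma prod_X_eq_monomial (s : Finset (Fin k)) (g : Fin k → Fin k) :
    (∏ i ∈ s, MvPowerSeries.X (g i) : MvPowerSeries (Fin k) ℚ) =
      MvPowerSeries.monomial (R := ℚ) (∑ i ∈ s, Finsupp.single (g i) 1) 1 := by
  classical
  induction s using Finset.cons_induction with
  | empty => simp [MvPowerSeries.monomial_zero_one]
  | cons a s ha ih =>
      rw [Finset.prod_cons, Finset.sum_cons, ih, MvPowerSeries.X_def,
        MvPowerSeries.monomial_mul_monomial, one_mul]

lemma map_valEmbedding_Ici (i : Fin k) :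
    (Finset.Ici i).map Fin.valEmbedding = Finset.Ico i.val k := by
  ext t
  simp only [Finset.mem_map, Finset.mem_Ici, Fin.valEmbedding_apply, Finset.mem_Ico]
  constructor
  · rintro ⟨j, hij, rfl⟩; exact ⟨hij, j.isLt⟩
  · rintro ⟨h1, h2⟩; exact ⟨⟨t, h2⟩, h1, rfl⟩

lemma sum_Ici_val (F : ℕ → ℕ) (i : Fin k) :
    ∑ j ∈ Finset.Ici i, F j.val = ∑ t ∈ Finset.Ico i.val k, F t := by
  rw [← map_valEmbedding_Ici, Finset.sum_map]
  rfl

lemma telescope (a : ℕ → ℕ) (ha : ∀ t, a (t + 1) ≤ a t) (hk : ∀ t, k ≤ t → a t = 0) :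
    ∀ t, ∑ u ∈ Finset.Ico t k, (a u - a (u + 1)) = a t := by
  suffices H : ∀ d t, k - t = d → ∑ u ∈ Finset.Ico t k, (a u - a (u + 1)) = a t by
    exact fun t => H (k - t) t rfl
  intro d
  induction d with
  | zero =>
      intro t ht
      rw [Finset.Ico_eq_empty (by omega), Finset.sum_empty, hk t (by omega)]
  | succ d ih =>
      intro t ht
      have htk : t < k := by omega
      rw [Finset.sum_eq_sum_Ico_succ_bot htk, ih (t + 1) (by omega),
        Nat.sub_add_cancel (ha t)]

lemma smul_cancel_of_ne_zero {m : Fin k →₀ ℕ} (hm : m ≠ 0) {c c' : ℕ}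
    (h : c • m = c' • m) : c = c' := by
  obtain ⟨p, hp⟩ : ∃ p, m p ≠ 0 := by
    by_contra hc
    push_neg at hc
    exact hm (Finsupp.ext fun p => hc p)
  have := congrArg (fun f : Fin k →₀ ℕ => f p) h
  simp only [Finsupp.smul_apply, smul_eq_mul] at this
  exact Nat.eq_of_mul_eq_mul_right (Nat.pos_of_ne_zero hp) this

open Classical in
lemma coeff_inv_one_sub_monomial (m : Fin k →₀ ℕ) (hm : m ≠ 0) (n : Fin k →₀ ℕ) :
    (MvPowerSeries.coeff (R := ℚ) n) (1 - MvPowerSeries.monomial (R := ℚ) m 1)⁻¹ =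
      if ∃ c : ℕ, n = c • m then 1 else 0 := by
  classical
  set S : MvPowerSeries (Fin k) ℚ :=
    fun n => if ∃ c : ℕ, n = c • m then (1 : ℚ) else 0 with hS
  have hScoeff : ∀ n, (MvPowerSeries.coeff (R := ℚ) n) S =
      if ∃ c : ℕ, n = c • m then 1 else 0 := fun n => by
    rw [MvPowerSeries.coeff_apply, hS]
  have h0 : MvPowerSeries.constantCoeff (σ := Fin k) (R := ℚ) (1 - MvPowerSeries.monomial (R := ℚ) m 1) ≠ 0 := by
    rw [← MvPowerSeries.coeff_zero_eq_constantCoeff_apply, map_sub,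
      MvPowerSeries.coeff_one, MvPowerSeries.coeff_monomial, if_pos rfl,
      if_neg (fun h => hm h.symm)]
    norm_num
  have key : (1 - MvPowerSeries.monomial (R := ℚ) m 1)⁻¹ = S := by
    rw [MvPowerSeries.inv_eq_iff_mul_eq_one h0]
    ext n
    rw [mul_sub, mul_one, map_sub, MvPowerSeries.coeff_mul_monomial,
      MvPowerSeries.coeff_one, hScoeff]
    by_cases hn : n = 0
    · subst hn
      rw [if_pos ⟨0, by simp⟩, if_neg, if_pos rfl, sub_zero]
      intro hle
      apply hm
      ext p
      exact Nat.le_zero.mp (hle p)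
    · rw [if_neg hn]
      by_cases hc : ∃ c : ℕ, n = c • m
      · obtain ⟨c, rfl⟩ := hc
        have hcne : c ≠ 0 := by rintro rfl; simp at hn
        obtain ⟨c', rfl⟩ := Nat.exists_eq_succ_of_ne_zero hcne
        rw [if_pos ⟨c' + 1, rfl⟩, if_pos, succ_nsmul, add_tsub_cancel_right,
          hScoeff, if_pos ⟨c', rfl⟩, mul_one, sub_self]
        · rw [succ_nsmul]; exact le_add_self
      · rw [if_neg hc]
        rw [zero_sub, neg_eq_zero]
        split_ifs with hle
        · rw [hScoeff, if_neg, zero_mul]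
          rintro ⟨c, hc'⟩
          exact hc ⟨c + 1, by rw [succ_nsmul, ← hc', tsub_add_cancel_of_le hle]⟩
        · rfl
  rw [key, hScoeff]

open Classical in
lemma coeff_term (γ : Fin k →₀ ℕ) (σ : Equiv.Perm (Fin k)) :
    (MvPowerSeries.coeff (R := ℚ) γ)
        (∏ j : Fin k, (1 - ∏ i ∈ Finset.Iic j, MvPowerSeries.X (σ i))⁻¹) =
      if Antitone (⇑γ ∘ ⇑σ) then 1 else 0 := by
  classical
  set m : Fin k → (Fin k →₀ ℕ) := fun j => ∑ i ∈ Finset.Iic j, Finsupp.single (σ i) 1 with hm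
  have hmapp : ∀ j i, m j (σ i) = if i ≤ j then 1 else 0 := by
    intro j i
    rw [hm, Finsupp.finset_sum_apply]
    have : ∀ i' ∈ Finset.Iic j, (Finsupp.single (σ i') 1 : Fin k →₀ ℕ) (σ i)
        = if i' = i then 1 else 0 := fun i' _ => by
      rw [Finsupp.single_apply]
      simp [EmbeddingLike.apply_eq_iff_eq]
    rw [Finset.sum_congr rfl this, Finset.sum_ite_eq' (Finset.Iic j) i (fun _ => 1)]
    simp [Finset.mem_Iic]
  have hmne : ∀ j, m j ≠ 0 := fun j h => by
    have h1 := congrArg (fun f : Fin k →₀ ℕ => f (σ j)) h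
    simp only [hmapp j j, if_pos (le_refl j), Finsupp.coe_zero, Pi.zero_apply] at h1
    exact one_ne_zero h1
  -- rewrite each factor
  have hfac : (∏ j : Fin k, ((1 - ∏ i ∈ Finset.Iic j, MvPowerSeries.X (σ i))⁻¹
        : MvPowerSeries (Fin k) ℚ)) =
      ∏ j : Fin k, (1 - MvPowerSeries.monomial (R := ℚ) (m j) 1)⁻¹ := by
    apply Finset.prod_congr rfl
    intro j _
    rw [prod_X_eq_monomial]
  rw [hfac, MvPowerSeries.coeff_prod]
  have hterm : ∀ l : Fin k →₀ (Fin k →₀ ℕ),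
      (∏ j : Fin k, (MvPowerSeries.coeff (R := ℚ) (l j)) (1 - MvPowerSeries.monomial (R := ℚ) (m j) 1)⁻¹)
        = if ∀ j ∈ Finset.univ, ∃ c : ℕ, l j = c • m j then (1 : ℚ) else 0 := by
    intro l
    rw [Finset.prod_congr rfl fun j _ => coeff_inv_one_sub_monomial (m j) (hmne j) (l j)]
    rw [Finset.prod_boole]
    congr 1
  rw [Finset.sum_congr rfl fun l _ => hterm l]
  -- key tail-sum identity
  have hkey : ∀ l ∈ Finset.finsuppAntidiag (Finset.univ : Finset (Fin k)) γ,
      ∀ c : Fin k → ℕ, (∀ j, l j = c j • m j) →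
      ∀ i, ∑ j ∈ Finset.Ici i, c j = γ (σ i) := by
    intro l hl c hc i
    have hsum : ∑ j ∈ Finset.univ, l j = γ := (Finset.mem_finsuppAntidiag.mp hl).1
    have h1 := congrArg (fun f : Fin k →₀ ℕ => f (σ i)) hsum
    rw [Finsupp.finset_sum_apply] at h1
    have h2 : ∀ j ∈ Finset.univ, (l j) (σ i) = if i ≤ j then c j else 0 := by
      intro j _
      rw [hc j, Finsupp.smul_apply, hmapp j i, smul_eq_mul, mul_ite, mul_one, mul_zero]
    rw [Finset.sum_congr rfl h2, ← Finset.sum_filter] at h1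
    have h3 : Finset.filter (fun j => i ≤ j) Finset.univ = Finset.Ici i := by
      ext j; simp [Finset.mem_Ici]
    rw [h3] at h1
    exact h1
  by_cases h : Antitone (⇑γ ∘ ⇑σ)
  · rw [if_pos h]
    -- construct L
    set a : ℕ → ℕ := fun t => if ht : t < k then γ (σ ⟨t, ht⟩) else 0 with ha_def
    have ha : ∀ t, a (t + 1) ≤ a t := by
      intro t
      by_cases h1 : t + 1 < k
      · have h0 : t < k := by omega
        rw [ha_def]
        simp only [dif_pos h1, dif_pos h0]
        exact h (by exact Fin.mk_le_mk.mpr (Nat.le_succ t))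
      · rw [ha_def]; simp only [dif_neg h1]; exact Nat.zero_le _
    have hk0 : ∀ t, k ≤ t → a t = 0 := fun t ht => by
      rw [ha_def]; simp only [dif_neg (by omega : ¬ t < k)]
    set F : ℕ → ℕ := fun t => a t - a (t + 1) with hF
    set c : Fin k → ℕ := fun j => F j.val with hcdef
    set L : Fin k →₀ (Fin k →₀ ℕ) :=
      Finsupp.equivFunOnFinite.symm (fun j => c j • m j) with hLdef
    have hL : ∀ j, L j = c j • m j := fun j => by
      rw [hLdef]; rfl
    have haval : ∀ i : Fin k, a i.val = γ (σ i) := fun i => by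
      rw [ha_def]; simp only [dif_pos i.isLt, Fin.eta]
    have htail : ∀ i : Fin k, ∑ j ∈ Finset.Ici i, c j = γ (σ i) := by
      intro i
      rw [hcdef]
      simp only
      rw [sum_Ici_val F i, hF]
      rw [telescope a ha hk0 i.val, haval]
    have hLsum : ∑ j ∈ Finset.univ, L j = γ := by
      ext p
      rw [Finsupp.finset_sum_apply]
      have hp : σ (σ.symm p) = p := σ.apply_symm_apply p
      set i := σ.symm p with hi
      rw [← hp]
      have h2 : ∀ j ∈ Finset.univ, (L j) (σ i) = if i ≤ j then c j else 0 := by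
        intro j _
        rw [hL j, Finsupp.smul_apply, hmapp j i, smul_eq_mul, mul_ite, mul_one, mul_zero]
      rw [Finset.sum_congr rfl h2, ← Finset.sum_filter]
      have h3 : Finset.filter (fun j => i ≤ j) Finset.univ = Finset.Ici i := by
        ext j; simp [Finset.mem_Ici]
      rw [h3, htail i]
    have hLmem : L ∈ Finset.finsuppAntidiag (Finset.univ : Finset (Fin k)) γ :=
      Finset.mem_finsuppAntidiag.mpr ⟨hLsum, Finset.subset_univ _⟩
    rw [Finset.sum_eq_single_of_mem L hLmem]
    · rw [if_pos fun j _ => ⟨c j, hL j⟩]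
    · -- uniqueness
      intro b hb hbL
      rw [if_neg]
      intro hP
      apply hbL
      choose c' hc' using fun j => hP j (Finset.mem_univ j)
      set F' : ℕ → ℕ := fun t => if ht : t < k then c' ⟨t, ht⟩ else 0 with hF'
      have hF'val : ∀ j : Fin k, c' j = F' j.val := fun j => by
        rw [hF']; simp only [dif_pos j.isLt, Fin.eta]
      have htail' : ∀ i : Fin k, ∑ j ∈ Finset.Ici i, c' j = γ (σ i) :=
        hkey b hb c' hc'
      have HIco : ∀ t, ∑ u ∈ Finset.Ico t k, F' u = ∑ u ∈ Finset.Ico t k, F u := by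
        intro t
        by_cases htk : t < k
        · have e1 : ∑ u ∈ Finset.Ico t k, F' u = γ (σ ⟨t, htk⟩) := by
            rw [← sum_Ici_val F' ⟨t, htk⟩,
              Finset.sum_congr rfl fun j _ => (hF'val j).symm, htail' ⟨t, htk⟩]
          have e2 : ∑ u ∈ Finset.Ico t k, F u = γ (σ ⟨t, htk⟩) := by
            rw [← sum_Ici_val F ⟨t, htk⟩]
            exact htail ⟨t, htk⟩
          rw [e1, e2]
        · rw [Finset.Ico_eq_empty (by omega : ¬ t < k)]; simp
      have hptwise : ∀ u, u < k → F' u = F u := by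
        intro u hu
        have h1 := HIco u
        have h2 := HIco (u + 1)
        rw [Finset.sum_eq_sum_Ico_succ_bot hu, Finset.sum_eq_sum_Ico_succ_bot hu
          (f := F)] at h1
        omega
      have hcc : ∀ j : Fin k, c' j = c j := fun j => by
        rw [hF'val j, hcdef]
        exact hptwise j.val j.isLt
      ext j p
      rw [hc' j, hL j, hcc j]
  · rw [if_neg h]
    apply Finset.sum_eq_zero
    intro l hl
    rw [if_neg]
    intro hP
    apply h
    choose c' hc' using fun j => hP j (Finset.mem_univ j)
    have htail' := hkey l hl c' hc'
    intro i i' hii'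
    simp only [Function.comp_apply]
    rw [← htail' i, ← htail' i']
    exact Finset.sum_le_sum_of_subset (Finset.Ici_subset_Ici.mpr hii')


lemma count_antitone (γ : Fin k →₀ ℕ) :
    (Finset.univ.filter fun σ : Equiv.Perm (Fin k) => Antitone (⇑γ ∘ ⇑σ)).card =
      ∏ j ∈ Finset.image (⇑γ) Finset.univ,
        Nat.factorial ((Finset.univ.filter fun i => γ i = j).card) := by
  classical
  set g : Fin k → ℕᵒᵈ := OrderDual.toDual ∘ ⇑γ with hg
  set σ0 := Tuple.sort g with hσ0
  have hmono : ∀ σ : Equiv.Perm (Fin k), Antitone (⇑γ ∘ ⇑σ) ↔ ⇑γ ∘ ⇑σ = ⇑γ ∘ ⇑σ0 := by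
    intro σ
    have h1 : Monotone (g ∘ ⇑σ) ↔ Antitone (⇑γ ∘ ⇑σ) :=
      monotone_toDual_comp_iff (f := ⇑γ ∘ ⇑σ)
    have h2 : g ∘ ⇑σ = g ∘ ⇑σ0 ↔ Monotone (g ∘ ⇑σ) :=
      Tuple.comp_sort_eq_comp_iff_monotone
    have h3 : g ∘ ⇑σ = g ∘ ⇑σ0 ↔ ⇑γ ∘ ⇑σ = ⇑γ ∘ ⇑σ0 := by
      constructor
      · intro hh
        funext x
        exact OrderDual.toDual.injective (congrFun hh x)
      · intro hh
        funext x
        exact congrArg OrderDual.toDual (congrFun hh x)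
    rw [← h1, ← h2, h3]
  rw [Finset.filter_congr fun σ _ => hmono σ]
  have hcard : (Finset.univ.filter fun σ : Equiv.Perm (Fin k) => ⇑γ ∘ ⇑σ = ⇑γ ∘ ⇑σ0).card
      = (Finset.univ.filter fun τ : Equiv.Perm (Fin k) => ⇑γ ∘ ⇑τ = ⇑γ).card := by
    apply Finset.card_nbij' (fun σ => σ * σ0⁻¹) (fun τ => τ * σ0)
    · intro σ hσ
      simp only [Finset.mem_coe, Finset.mem_filter, Finset.mem_univ, true_and] at hσ ⊢
      funext x
      have := congrFun hσ (σ0⁻¹ x)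
      simpa using this
    · intro τ hτ
      simp only [Finset.mem_coe, Finset.mem_filter, Finset.mem_univ, true_and] at hτ ⊢
      funext x
      have := congrFun hτ (σ0 x)
      simpa using this
    · intro σ _; simp [mul_assoc]
    · intro τ _; simp [mul_assoc]
  rw [hcard]
  have hstab := DomMulAct.stabilizer_card' (f := ⇑γ)
  rw [Fintype.card_subtype] at hstab
  rw [hstab]
  apply Finset.prod_congr rfl
  intro i _
  rw [Fintype.card_subtype]


theorem symmetrized_lhs_coefficient (k : ℕ) (γ : Fin k →₀ ℕ) :
    MvPowerSeries.coeff (R := ℚ) γ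
        (∑ σ : Equiv.Perm (Fin k),
          ∏ j : Fin k, (1 - ∏ i ∈ Finset.Iic j, MvPowerSeries.X (σ i))⁻¹) =
      ∏ j ∈ Finset.image (⇑γ) Finset.univ,
        (Nat.factorial ((Finset.univ.filter (fun i => γ i = j)).card) : ℚ) := by
  classical
  rw [map_sum, Finset.sum_congr rfl fun σ _ => coeff_term γ σ, Finset.sum_boole,
    count_antitone γ]
  push_cast
  rfl
end

section
/- For every positive integer k, as formal power series (or for |x| < 1): ∏_{j=1}^k 1/(1-x^j) = Σ_{λ ⊢ k} 1/(∏_{m≥1} m^{f_m(λ)} f_m(λ)!) · ∏_{m≥1} 1/(1-x^m)^{f_m(λ)}, where f_m(λ) is the number of parts of λ equal to m. -/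
open PowerSeries Finset

noncomputable section MacMahonAux

namespace MacMahonAux

/-- The basic geometric factor `1/(1-X^m)`. -/
def Pm (m : ℕ) : PowerSeries ℚ := (1 - (PowerSeries.X : PowerSeries ℚ) ^ m)⁻¹

/-- The product of `Pm p` over the parts of a multiset. -/
def Qs (s : Multiset ℕ) : PowerSeries ℚ := (s.map Pm).prod

/-- `z_λ = ∏ m^{f_m} f_m!` as a natural number. -/
def zzN (s : Multiset ℕ) : ℕ := s.prod * ∏ m ∈ s.toFinset, (s.count m).factorial

/-- The weight `1/z_λ`. -/
def w (s : Multiset ℕ) : ℚ := ((zzN s : ℚ))⁻¹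

/-- The finset of parts-multisets of partitions of `j`. -/
def PF (j : ℕ) : Finset (Multiset ℕ) :=
  Finset.univ.image (fun P : Nat.Partition j => P.parts)

/-- The partial fraction sum. -/
def Gg (j : ℕ) : PowerSeries ℚ := ∑ s ∈ PF j, (PowerSeries.C (R := ℚ)) (w s) * Qs s

/-- The signed numerical sum `∑_{ε ⊢ d} (-1)^{ℓ(ε)}/z_ε`. -/
def Sg (d : ℕ) : ℚ := ∑ s ∈ PF d, (-1 : ℚ) ^ (Multiset.card s) * w s

lemma mem_PF {j : ℕ} {s : Multiset ℕ} :
    s ∈ PF j ↔ s.sum = j ∧ ∀ p ∈ s, 0 < p := by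
  constructor
  · rintro hs
    simp only [PF, Finset.mem_image] at hs
    obtain ⟨P, -, rfl⟩ := hs
    exact ⟨P.parts_sum, fun p hp => P.parts_pos hp⟩
  · rintro ⟨h1, h2⟩
    simp only [PF, Finset.mem_image]
    refine ⟨Nat.Partition.ofSums j s h1, Finset.mem_univ _, ?_⟩
    simp only [Nat.Partition.ofSums_parts]
    exact Multiset.filter_eq_self.2 fun p hp => (h2 p hp).ne'

lemma zzN_pos {s : Multiset ℕ} (hs : ∀ p ∈ s, 0 < p) : 0 < zzN s := by
  apply Nat.mul_pos
  · exact Multiset.prod_pos hs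
  · exact Finset.prod_pos fun m _ => Nat.factorial_pos _

lemma zzN_cons (m : ℕ) (t : Multiset ℕ) :
    zzN (m ::ₘ t) = (m * (t.count m + 1)) * zzN t := by
  rw [zzN, zzN, Multiset.prod_cons, Multiset.toFinset_cons]
  have h1 : ∏ x ∈ insert m t.toFinset, ((m ::ₘ t).count x).factorial
      = (t.count m + 1).factorial * ∏ x ∈ t.toFinset.erase m, (t.count x).factorial := by
    rw [← Finset.mul_prod_erase _ _ (Finset.mem_insert_self m t.toFinset),
      Finset.erase_insert_eq_erase, Multiset.count_cons_self]
    congr 1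
    refine Finset.prod_congr rfl fun x hx => ?_
    rw [Multiset.count_cons_of_ne (Finset.ne_of_mem_erase hx)]
  rw [h1]
  by_cases hm : m ∈ t.toFinset
  · rw [show ∏ x ∈ t.toFinset, (t.count x).factorial
        = (t.count m).factorial * ∏ x ∈ t.toFinset.erase m, (t.count x).factorial from
        (Finset.mul_prod_erase _ _ hm).symm, Nat.factorial_succ]
    ring
  · have h0 : t.count m = 0 := by
      exact Multiset.count_eq_zero_of_notMem (fun h => hm (Multiset.mem_toFinset.2 h))
    rw [Finset.erase_eq_of_notMem hm, h0]
    simp [Nat.factorial]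
    ring

lemma count_antidiagonal' (F : Finset ℕ) :
    ∀ (s a b : Multiset ℕ), a + b = s → s.toFinset ⊆ F →
    Multiset.count (a, b) (Multiset.antidiagonal s)
      = ∏ m ∈ F, (s.count m).choose (a.count m) := by
  intro s
  induction s using Multiset.induction_on with
  | empty =>
    intro a b hab hF
    have ha : a = 0 := Multiset.le_zero.1 (hab ▸ Multiset.le_add_right a b)
    have hb : b = 0 := Multiset.le_zero.1 (hab ▸ Multiset.le_add_left b a)
    subst ha; subst hb
    simp
  | cons x t ih =>
    intro a b hab hF
    have htF : t.toFinset ⊆ F := by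
      refine Finset.Subset.trans ?_ hF
      rw [Multiset.toFinset_cons]
      exact Finset.subset_insert _ _
    have hxF : x ∈ F := hF (by rw [Multiset.toFinset_cons]; exact Finset.mem_insert_self _ _)
    have hinj1 : Function.Injective
        (Prod.map id (x ::ₘ ·) : Multiset ℕ × Multiset ℕ → Multiset ℕ × Multiset ℕ) :=
      Function.Injective.prodMap Function.injective_id
        (fun u v h => (Multiset.cons_inj_right x).1 h)
    have hinj2 : Function.Injective
        (Prod.map (x ::ₘ ·) id : Multiset ℕ × Multiset ℕ → Multiset ℕ × Multiset ℕ) :=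
      Function.Injective.prodMap (fun u v h => (Multiset.cons_inj_right x).1 h)
        Function.injective_id
    rw [Multiset.antidiagonal_cons, Multiset.count_add]
    -- the two counts
    have hcount1 : Multiset.count (a, b)
        (Multiset.map (Prod.map id (x ::ₘ ·)) (Multiset.antidiagonal t))
        = if x ∈ b then Multiset.count (a, b.erase x) (Multiset.antidiagonal t) else 0 := by
      split_ifs with hxb
      · conv_lhs => rw [show ((a, b) : Multiset ℕ × Multiset ℕ)
          = Prod.map id (x ::ₘ ·) (a, b.erase x) by
            simp [Prod.map, Multiset.cons_erase hxb]]
        exact Multiset.count_map_eq_count' _ _ hinj1 _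
      · rw [Multiset.count_eq_zero]
        intro hmem
        obtain ⟨⟨u, v⟩, -, heq⟩ := Multiset.mem_map.1 hmem
        apply hxb
        have : x ::ₘ v = b := congrArg Prod.snd heq
        rw [← this]
        exact Multiset.mem_cons_self _ _
    have hcount2 : Multiset.count (a, b)
        (Multiset.map (Prod.map (x ::ₘ ·) id) (Multiset.antidiagonal t))
        = if x ∈ a then Multiset.count (a.erase x, b) (Multiset.antidiagonal t) else 0 := by
      split_ifs with hxa
      · conv_lhs => rw [show ((a, b) : Multiset ℕ × Multiset ℕ)
          = Prod.map (x ::ₘ ·) id (a.erase x, b) by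
            simp [Prod.map, Multiset.cons_erase hxa]]
        exact Multiset.count_map_eq_count' _ _ hinj2 _
      · rw [Multiset.count_eq_zero]
        intro hmem
        obtain ⟨⟨u, v⟩, -, heq⟩ := Multiset.mem_map.1 hmem
        apply hxa
        have : x ::ₘ u = a := congrArg Prod.fst heq
        rw [← this]
        exact Multiset.mem_cons_self _ _
    rw [hcount1, hcount2]
    -- RHS manipulation
    have hRHS : ∏ m ∈ F, ((x ::ₘ t).count m).choose (a.count m)
        = ((t.count x + 1).choose (a.count x))
          * ∏ m ∈ F.erase x, (t.count m).choose (a.count m) := by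
      rw [← Finset.mul_prod_erase _ _ hxF, Multiset.count_cons_self]
      congr 1
      refine Finset.prod_congr rfl fun m hm => ?_
      rw [Multiset.count_cons_of_ne (Finset.ne_of_mem_erase hm)]
    rw [hRHS]
    have hxab : x ∈ a + b := by rw [hab]; exact Multiset.mem_cons_self _ _
    have hcx : a.count x + b.count x = t.count x + 1 := by
      have := congrArg (Multiset.count x) hab
      rwa [Multiset.count_add, Multiset.count_cons_self] at this
    by_cases hxa : x ∈ a <;> by_cases hxb : x ∈ b
    · -- both
      rw [if_pos hxa, if_pos hxb]
      have hab1 : a + b.erase x = t := by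
        have : x ::ₘ (a + b.erase x) = x ::ₘ t := by
          rw [← hab]
          rw [show x ::ₘ (a + b.erase x) = a + (x ::ₘ b.erase x) from (Multiset.add_cons x a (b.erase x)).symm]
          rw [Multiset.cons_erase hxb]
        exact (Multiset.cons_inj_right x).1 this
      have hab2 : a.erase x + b = t := by
        have : x ::ₘ (a.erase x + b) = x ::ₘ t := by
          rw [← hab, ← Multiset.cons_add, Multiset.cons_erase hxa]
        exact (Multiset.cons_inj_right x).1 this
      rw [ih a (b.erase x) hab1 htF, ih (a.erase x) b hab2 htF]
      rw [← Finset.mul_prod_erase _ _ hxF, ← Finset.mul_prod_erase _ _ hxF]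
      have herase : ∏ m ∈ F.erase x, (t.count m).choose ((a.erase x).count m)
          = ∏ m ∈ F.erase x, (t.count m).choose (a.count m) := by
        refine Finset.prod_congr rfl fun m hm => ?_
        rw [Multiset.count_erase_of_ne (Finset.ne_of_mem_erase hm)]
      rw [herase, Multiset.count_erase_self]
      rw [← add_mul]
      congr 1
      have hca : 1 ≤ a.count x := Multiset.one_le_count_iff_mem.2 hxa
      obtain ⟨c, hc⟩ : ∃ c, a.count x = c + 1 := ⟨a.count x - 1, by omega⟩
      rw [hc]
      simp only [Nat.add_sub_cancel]
      rw [Nat.choose_succ_succ']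
      omega
    · -- x ∈ a only
      rw [if_pos hxa, if_neg hxb]
      have hcb : b.count x = 0 := Multiset.count_eq_zero_of_notMem hxb
      have hca : a.count x = t.count x + 1 := by omega
      have hab2 : a.erase x + b = t := by
        have : x ::ₘ (a.erase x + b) = x ::ₘ t := by
          rw [← hab, ← Multiset.cons_add, Multiset.cons_erase hxa]
        exact (Multiset.cons_inj_right x).1 this
      rw [ih (a.erase x) b hab2 htF]
      rw [← Finset.mul_prod_erase _ _ hxF]
      have herase : ∏ m ∈ F.erase x, (t.count m).choose ((a.erase x).count m)
          = ∏ m ∈ F.erase x, (t.count m).choose (a.count m) := by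
        refine Finset.prod_congr rfl fun m hm => ?_
        rw [Multiset.count_erase_of_ne (Finset.ne_of_mem_erase hm)]
      rw [herase, Multiset.count_erase_self, hca]
      simp [Nat.choose_self]
    · -- x ∈ b only
      rw [if_pos hxb, if_neg hxa]
      have hca : a.count x = 0 := Multiset.count_eq_zero_of_notMem hxa
      have hab1 : a + b.erase x = t := by
        have : x ::ₘ (a + b.erase x) = x ::ₘ t := by
          rw [← hab, show x ::ₘ (a + b.erase x) = a + (x ::ₘ b.erase x) from (Multiset.add_cons x a (b.erase x)).symm, Multiset.cons_erase hxb]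
        exact (Multiset.cons_inj_right x).1 this
      rw [ih a (b.erase x) hab1 htF]
      rw [← Finset.mul_prod_erase _ _ hxF, hca]
      simp [Nat.choose_zero_right]
    · exact absurd (Multiset.mem_add.1 hxab) (by tauto)

lemma zzN_add (a b : Multiset ℕ) :
    zzN (a + b) = (∏ m ∈ (a + b).toFinset, ((a + b).count m).choose (a.count m))
      * zzN a * zzN b := by
  have hsa : a.toFinset ⊆ (a + b).toFinset := by
    rw [Multiset.toFinset_add]; exact Finset.subset_union_left
  have hsb : b.toFinset ⊆ (a + b).toFinset := by
    rw [Multiset.toFinset_add]; exact Finset.subset_union_right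
  have hfa : ∏ m ∈ a.toFinset, (a.count m).factorial
      = ∏ m ∈ (a + b).toFinset, (a.count m).factorial := by
    refine Finset.prod_subset hsa fun m _ hm => ?_
    rw [Multiset.count_eq_zero_of_notMem (fun h => hm (Multiset.mem_toFinset.2 h))]
    rfl
  have hfb : ∏ m ∈ b.toFinset, (b.count m).factorial
      = ∏ m ∈ (a + b).toFinset, (b.count m).factorial := by
    refine Finset.prod_subset hsb fun m _ hm => ?_
    rw [Multiset.count_eq_zero_of_notMem (fun h => hm (Multiset.mem_toFinset.2 h))]
    rfl
  rw [zzN, zzN, zzN, Multiset.prod_add, hfa, hfb]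
  have hkey : ∏ m ∈ (a + b).toFinset, ((a + b).count m).factorial
      = (∏ m ∈ (a + b).toFinset, ((a + b).count m).choose (a.count m))
        * (∏ m ∈ (a + b).toFinset, (a.count m).factorial)
        * (∏ m ∈ (a + b).toFinset, (b.count m).factorial) := by
    rw [← Finset.prod_mul_distrib, ← Finset.prod_mul_distrib]
    refine Finset.prod_congr rfl fun m _ => ?_
    have hle : a.count m ≤ (a + b).count m := by
      rw [Multiset.count_add]; omega
    have := Nat.choose_mul_factorial_mul_factorial hle
    rw [show (a+b).count m - a.count m = b.count m by rw [Multiset.count_add]; omega] at this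
    omega
  rw [hkey]
  ring

lemma w_mul_count {a b : Multiset ℕ} (ha : ∀ p ∈ a, 0 < p) (hb : ∀ p ∈ b, 0 < p) :
    w (a + b) * (Multiset.count (a, b) (Multiset.antidiagonal (a + b)) : ℚ)
      = w a * w b := by
  rw [count_antidiagonal' (a + b).toFinset (a + b) a b rfl (Finset.Subset.refl _)]
  have hab : ∀ p ∈ a + b, 0 < p := by
    intro p hp
    rcases Multiset.mem_add.1 hp with h | h
    exacts [ha p h, hb p h]
  have h0 : ((zzN (a+b) : ℚ)) ≠ 0 := Nat.cast_ne_zero.2 (zzN_pos hab).ne'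
  have ha0 : ((zzN a : ℚ)) ≠ 0 := Nat.cast_ne_zero.2 (zzN_pos ha).ne'
  have hb0 : ((zzN b : ℚ)) ≠ 0 := Nat.cast_ne_zero.2 (zzN_pos hb).ne'
  rw [w, w, w]
  rw [show ((zzN (a+b) : ℚ)) = (∏ m ∈ (a + b).toFinset, (((a + b).count m).choose (a.count m) : ℚ))
      * (zzN a : ℚ) * (zzN b : ℚ) by rw [zzN_add a b]; push_cast; ring]
  have hP0 : (∏ m ∈ (a + b).toFinset, (((a + b).count m).choose (a.count m) : ℚ)) ≠ 0 := by
    apply Finset.prod_ne_zero_iff.2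
    intro m hm
    have : 0 < ((a + b).count m).choose (a.count m) :=
      Nat.choose_pos (by rw [Multiset.count_add]; omega)
    exact_mod_cast this.ne'
  push_cast
  set P := ∏ m ∈ (a + b).toFinset, (((a + b).count m).choose (a.count m) : ℚ) with hP
  calc (P * (zzN a : ℚ) * (zzN b : ℚ))⁻¹ * P
      = (P⁻¹ * P) * ((zzN a : ℚ)⁻¹ * (zzN b : ℚ)⁻¹) := by rw [mul_inv, mul_inv]; ring
    _ = (zzN a : ℚ)⁻¹ * (zzN b : ℚ)⁻¹ := by rw [inv_mul_cancel₀ hP0, one_mul]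

lemma one_sub_X_pow_mul_Pm {m : ℕ} (hm : 0 < m) :
    (1 - (PowerSeries.X : PowerSeries ℚ) ^ m) * Pm m = 1 := by
  apply PowerSeries.mul_inv_cancel
  simp [zero_pow hm.ne']

lemma X_pow_mul_Pm {m : ℕ} (hm : 0 < m) :
    (PowerSeries.X : PowerSeries ℚ) ^ m * Pm m = Pm m - 1 := by
  have h1 := one_sub_X_pow_mul_Pm hm
  linear_combination -h1

lemma X_pow_sum_mul_Qs (s : Multiset ℕ) (hs : ∀ p ∈ s, 0 < p) :
    (PowerSeries.X : PowerSeries ℚ) ^ s.sum * Qs s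
      = (s.map (fun p => Pm p - 1)).prod := by
  induction s using Multiset.induction_on with
  | empty => simp [Qs]
  | cons a t ih =>
    have ha : 0 < a := hs a (Multiset.mem_cons_self _ _)
    have ht : ∀ p ∈ t, 0 < p := fun p hp => hs p (Multiset.mem_cons_of_mem hp)
    simp only [Multiset.sum_cons, Multiset.map_cons, Multiset.prod_cons, Qs, pow_add]
    rw [← ih ht, ← X_pow_mul_Pm ha]
    simp only [Qs]
    ring

lemma w_cons {m : ℕ} {t : Multiset ℕ} (hm : 0 < m) (ht : ∀ p ∈ t, 0 < p) :
    w (m ::ₘ t) * (((t.count m : ℚ) + 1) * m) = w t := by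
  have ht0 : ((zzN t : ℚ)) ≠ 0 := Nat.cast_ne_zero.2 (zzN_pos ht).ne'
  have hm0 : (m : ℚ) ≠ 0 := Nat.cast_ne_zero.2 hm.ne'
  have hc0 : ((t.count m : ℚ) + 1) ≠ 0 := by positivity
  rw [w, w, zzN_cons]
  push_cast
  field_simp

lemma sum_count_mul {d : ℕ} {s : Multiset ℕ} (hs : s ∈ PF d) :
    ∑ m ∈ Finset.Icc 1 d, s.count m * m = d := by
  obtain ⟨h1, h2⟩ := mem_PF.1 hs
  have hsub : s.toFinset ⊆ Finset.Icc 1 d := by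
    intro m hm
    rw [Multiset.mem_toFinset] at hm
    rw [Finset.mem_Icc]
    exact ⟨h2 m hm, (Multiset.le_sum_of_mem hm).trans_eq h1⟩
  have h3 := Finset.sum_multiset_map_count s id
  rw [Multiset.map_id] at h3
  have hmain : ∑ m ∈ Finset.Icc 1 d, s.count m * m = s.sum := by
    rw [h3]
    simp only [smul_eq_mul, id_eq]
    symm
    apply Finset.sum_subset hsub
    intro m _ hm
    rw [Multiset.count_eq_zero_of_notMem (fun h => hm (Multiset.mem_toFinset.2 h))]
    simp
  rw [hmain, h1]

lemma Sg_rec (d : ℕ) (hd : 1 ≤ d) :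
    (d : ℚ) * Sg d = - ∑ m ∈ Finset.Icc 1 d, Sg (d - m) := by
  rw [Sg, Finset.mul_sum]
  have step1 : ∀ s ∈ PF d, (d : ℚ) * ((-1 : ℚ) ^ (Multiset.card s) * w s)
      = ∑ m ∈ Finset.Icc 1 d, (-1 : ℚ) ^ (Multiset.card s) * w s * ((s.count m : ℚ) * m) := by
    intro s hs
    rw [← Finset.mul_sum]
    have h4 : ∑ m ∈ Finset.Icc 1 d, ((s.count m : ℚ) * m) = (d : ℚ) := by
      rw [show ((d:ℕ) : ℚ) = ((∑ m ∈ Finset.Icc 1 d, s.count m * m : ℕ) : ℚ) by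
        rw [sum_count_mul hs]]
      push_cast
      rfl
    rw [h4]
    ring
  rw [Finset.sum_congr rfl step1, Finset.sum_comm]
  rw [← Finset.sum_neg_distrib]
  apply Finset.sum_congr rfl
  intro m hm
  rw [Finset.mem_Icc] at hm
  rw [← Finset.sum_filter_of_ne (p := fun s => m ∈ s)
    (by intro s _ hne
        by_contra hms
        apply hne
        rw [Multiset.count_eq_zero_of_notMem hms]
        push_cast
        ring)]
  rw [show -Sg (d - m) = ∑ t ∈ PF (d - m), -((-1 : ℚ) ^ (Multiset.card t) * w t) by
    rw [Sg, ← Finset.sum_neg_distrib]]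
  apply Finset.sum_nbij' (i := fun s => Multiset.erase s m) (j := fun t => m ::ₘ t)
  · intro s hs
    simp only [Finset.mem_filter] at hs
    obtain ⟨hsPF, hms⟩ := hs
    obtain ⟨h1, h2⟩ := mem_PF.1 hsPF
    rw [mem_PF]
    constructor
    · have h5 := Multiset.cons_erase hms
      have hsum : m + (s.erase m).sum = d := by
        rw [← Multiset.sum_cons, h5, h1]
      omega
    · exact fun p hp => h2 p (Multiset.mem_of_mem_erase hp)
  · intro t ht
    obtain ⟨h1, h2⟩ := mem_PF.1 ht
    simp only [Finset.mem_filter]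
    refine ⟨mem_PF.2 ⟨?_, ?_⟩, Multiset.mem_cons_self _ _⟩
    · rw [Multiset.sum_cons, h1]; omega
    · intro p hp
      rcases Multiset.mem_cons.1 hp with rfl | hp
      exacts [hm.1, h2 p hp]
  · intro s hs
    simp only [Finset.mem_filter] at hs
    exact Multiset.cons_erase hs.2
  · intro t _
    exact Multiset.erase_cons_head m t
  · intro s hs
    simp only [Finset.mem_filter] at hs
    obtain ⟨hsPF, hms⟩ := hs
    obtain ⟨h1, h2⟩ := mem_PF.1 hsPF
    set t := s.erase m with htdef
    have hst : s = m ::ₘ t := (Multiset.cons_erase hms).symm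
    have hmpos : 0 < m := hm.1
    have htpos : ∀ p ∈ t, 0 < p := fun p hp => h2 p (Multiset.mem_of_mem_erase hp)
    rw [hst]
    rw [Multiset.card_cons, Multiset.count_cons_self]
    have hw := w_cons hmpos htpos
    push_cast
    calc (-1:ℚ) ^ (Multiset.card t + 1) * w (m ::ₘ t) * ((t.count m + 1 : ℚ) * m)
        = (-1:ℚ) ^ (Multiset.card t + 1) * (w (m ::ₘ t) * (((t.count m : ℚ) + 1) * m)) := by
          push_cast; ring
      _ = (-1:ℚ) ^ (Multiset.card t + 1) * w t := by rw [hw]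
      _ = -((-1:ℚ) ^ (Multiset.card t) * w t) := by ring

lemma PF_zero : PF 0 = {0} := by
  ext s
  simp only [mem_PF, Finset.mem_singleton]
  constructor
  · rintro ⟨h1, h2⟩
    rw [Multiset.eq_zero_iff_forall_notMem]
    intro p hp
    exact absurd (Multiset.sum_eq_zero_iff.1 h1 p hp) (h2 p hp).ne'
  · rintro rfl; simp

lemma PF_one : PF 1 = {{1}} := by
  ext s
  simp only [PF, Finset.mem_image, Finset.mem_singleton]
  constructor
  · rintro ⟨P, -, rfl⟩
    exact P.partition_one_parts
  · rintro rfl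
    exact ⟨Nat.Partition.indiscrete 1, Finset.mem_univ _, by simp⟩

lemma zzN_zero : zzN 0 = 1 := by simp [zzN]

lemma Sg_zero : Sg 0 = 1 := by
  simp [Sg, PF_zero, w, zzN_zero]

lemma Sg_one : Sg 1 = -1 := by
  have : zzN {1} = 1 := by simp [zzN]
  simp [Sg, PF_one, w, this]

lemma Sg_eq_zero {d : ℕ} (hd : 2 ≤ d) : Sg d = 0 := by
  induction d using Nat.strong_induction_on with
  | _ d ih =>
    have hd1 : 1 ≤ d := by omega
    have h := Sg_rec d hd1
    have hsum : ∑ m ∈ Finset.Icc 1 d, Sg (d - m) = ∑ j ∈ Finset.range d, Sg j := by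
      apply Finset.sum_nbij' (fun m => d - m) (fun j => d - j)
      · intro m hm; simp only [Finset.mem_Icc] at hm; simp only [Finset.mem_range]; omega
      · intro j hj; simp only [Finset.mem_range] at hj; simp only [Finset.mem_Icc]; omega
      · intro m hm; simp only [Finset.mem_Icc] at hm; omega
      · intro j hj; simp only [Finset.mem_range] at hj; omega
      · intro m hm; rfl
    have hrange : ∑ j ∈ Finset.range d, Sg j = 0 := by
      have hsub : ({0, 1} : Finset ℕ) ⊆ Finset.range d := by
        intro j hj; simp only [Finset.mem_insert, Finset.mem_singleton] at hj
        simp only [Finset.mem_range]; omega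
      rw [← Finset.sum_subset hsub]
      · rw [Finset.sum_pair (by norm_num), Sg_zero, Sg_one]; ring
      · intro j hj hj2
        simp only [Finset.mem_insert, Finset.mem_singleton] at hj2
        simp only [Finset.mem_range] at hj
        exact ih j hj (by omega)
    rw [hsum, hrange, neg_zero] at h
    have hd0 : (d : ℚ) ≠ 0 := by positivity
    exact (mul_eq_zero.1 h).resolve_left hd0

lemma prod_Pm_sub_one (s : Multiset ℕ) :
    (s.map (fun p => Pm p - 1)).prod
      = ((Multiset.antidiagonal s).map
          (fun pr => Qs pr.1 * (-1 : PowerSeries ℚ) ^ (Multiset.card pr.2))).sum := by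
  simp only [sub_eq_add_neg]
  rw [Multiset.prod_map_add]
  congr 1
  apply Multiset.map_congr rfl
  intro pr _
  rw [Qs]
  congr 1
  rw [Multiset.map_const', Multiset.prod_replicate]

lemma key (k : ℕ) (hk : 1 ≤ k) :
    (1 - (PowerSeries.X : PowerSeries ℚ) ^ k) * Gg k = Gg (k - 1) := by
  set T : Multiset ℕ × Multiset ℕ → PowerSeries ℚ :=
    fun pr => (PowerSeries.C (R := ℚ)) (w pr.1 * w pr.2 * ((-1 : ℚ)) ^ (Multiset.card pr.2)) * Qs pr.1
    with hT
  set A : Multiset ℕ → Finset (Multiset ℕ × Multiset ℕ) :=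
    fun s => (Multiset.antidiagonal s).toFinset with hA
  have hexp : ∀ s ∈ PF k, (PowerSeries.C (R := ℚ)) (w s) * ((PowerSeries.X : PowerSeries ℚ) ^ k * Qs s)
      = ∑ pr ∈ A s, T pr := by
    intro s hs
    obtain ⟨h1, h2⟩ := mem_PF.1 hs
    rw [← h1, X_pow_sum_mul_Qs s h2, prod_Pm_sub_one, Finset.sum_multiset_map_count,
      Finset.mul_sum]
    apply Finset.sum_congr rfl
    intro pr hpr
    have hpr' : pr.1 + pr.2 = s := Multiset.mem_antidiagonal.1 (Multiset.mem_toFinset.1 hpr)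
    have hpos1 : ∀ p ∈ pr.1, 0 < p := fun p hp => h2 p (by
      rw [← hpr']; exact Multiset.mem_add.2 (Or.inl hp))
    have hpos2 : ∀ p ∈ pr.2, 0 < p := fun p hp => h2 p (by
      rw [← hpr']; exact Multiset.mem_add.2 (Or.inr hp))
    have hw : w s * ((Multiset.count pr (Multiset.antidiagonal s)) : ℚ) = w pr.1 * w pr.2 := by
      conv_lhs => rw [← hpr']
      rw [show pr = (pr.1, pr.2) from rfl]
      exact w_mul_count hpos1 hpos2
    rw [nsmul_eq_mul]
    have hc1 : ((Multiset.count pr (Multiset.antidiagonal s) : PowerSeries ℚ))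
        = (PowerSeries.C (R := ℚ)) ((Multiset.count pr (Multiset.antidiagonal s) : ℚ)) :=
      (map_natCast ((PowerSeries.C (R := ℚ))) _).symm
    have hc2 : ((-1 : PowerSeries ℚ)) ^ (Multiset.card pr.2)
        = (PowerSeries.C (R := ℚ)) (((-1 : ℚ)) ^ (Multiset.card pr.2)) := by
      rw [map_pow, map_neg, map_one]
    rw [hc1, hc2, hT]
    have hstep : (PowerSeries.C (R := ℚ)) (w s)
          * ((PowerSeries.C (R := ℚ)) ((Multiset.count pr (Multiset.antidiagonal s) : ℚ))
            * (Qs pr.1 * (PowerSeries.C (R := ℚ)) (((-1 : ℚ)) ^ (Multiset.card pr.2))))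
        = (PowerSeries.C (R := ℚ)) ((w s * (Multiset.count pr (Multiset.antidiagonal s) : ℚ))
            * ((-1 : ℚ)) ^ (Multiset.card pr.2)) * Qs pr.1 := by
      rw [map_mul, map_mul]
      ring
    rw [hstep, hw]
  have hdisj : (↑(PF k) : Set (Multiset ℕ)).PairwiseDisjoint A := by
    intro s1 _ s2 _ hne
    rw [Function.onFun, Finset.disjoint_left]
    intro pr hp1 hp2
    apply hne
    rw [← Multiset.mem_antidiagonal.1 (Multiset.mem_toFinset.1 hp1),
      ← Multiset.mem_antidiagonal.1 (Multiset.mem_toFinset.1 hp2)]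
  have hdisj2 : (↑(Finset.range (k+1)) : Set ℕ).PairwiseDisjoint
      (fun d => PF (k-d) ×ˢ PF d) := by
    intro d1 _ d2 _ hne
    rw [Function.onFun, Finset.disjoint_left]
    intro pr hp1 hp2
    apply hne
    rw [Finset.mem_product] at hp1 hp2
    rw [← (mem_PF.1 hp1.2).1, ← (mem_PF.1 hp2.2).1]
  have hsets : (PF k).biUnion A
      = (Finset.range (k+1)).biUnion (fun d => PF (k-d) ×ˢ PF d) := by
    ext pr
    simp only [Finset.mem_biUnion, hA, Multiset.mem_toFinset, Multiset.mem_antidiagonal,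
      Finset.mem_product, mem_PF, Finset.mem_range]
    constructor
    · rintro ⟨s, hsPF, hpr⟩
      obtain ⟨h1, h2⟩ := hsPF
      have hsum : pr.1.sum + pr.2.sum = k := by
        rw [← Multiset.sum_add, hpr, h1]
      refine ⟨pr.2.sum, by omega, ⟨⟨by omega, fun p hp => h2 p ?_⟩, ⟨rfl, fun p hp => h2 p ?_⟩⟩⟩
      · rw [← hpr]; exact Multiset.mem_add.2 (Or.inl hp)
      · rw [← hpr]; exact Multiset.mem_add.2 (Or.inr hp)
    · rintro ⟨d, hd, ⟨⟨ha1, ha2⟩, ⟨hb1, hb2⟩⟩⟩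
      refine ⟨pr.1 + pr.2, ⟨?_, fun p hp => ?_⟩, rfl⟩
      · rw [Multiset.sum_add, ha1, hb1]; omega
      · rcases Multiset.mem_add.1 hp with h | h
        exacts [ha2 p h, hb2 p h]
  have hinner : ∀ d ∈ Finset.range (k+1),
      ∑ pr ∈ PF (k-d) ×ˢ PF d, T pr = (PowerSeries.C (R := ℚ)) (Sg d) * Gg (k-d) := by
    intro d _
    rw [Sg, Gg, map_sum, Finset.sum_mul_sum, Finset.sum_product]
    rw [Finset.sum_comm]
    apply Finset.sum_congr rfl
    intro a _
    apply Finset.sum_congr rfl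
    intro b _
    simp only [hT, map_mul, map_pow, map_neg, map_one]
    ring
  have hXG : (PowerSeries.X : PowerSeries ℚ) ^ k * Gg k = Gg k - Gg (k-1) := by
    conv_lhs => rw [Gg]
    rw [Finset.mul_sum]
    rw [Finset.sum_congr rfl (fun s hs => by
      rw [show (PowerSeries.X : PowerSeries ℚ)^k * ((PowerSeries.C (R := ℚ)) (w s) * Qs s)
          = (PowerSeries.C (R := ℚ)) (w s) * ((PowerSeries.X : PowerSeries ℚ)^k * Qs s) by ring,
        hexp s hs])]
    rw [← Finset.sum_biUnion hdisj, hsets, Finset.sum_biUnion hdisj2]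
    rw [Finset.sum_congr rfl hinner]
    have hsub01 : ({0, 1} : Finset ℕ) ⊆ Finset.range (k+1) := by
      intro j hj
      simp only [Finset.mem_insert, Finset.mem_singleton] at hj
      rw [Finset.mem_range]
      omega
    rw [← Finset.sum_subset hsub01 (fun d hd hd2 => by
      simp only [Finset.mem_insert, Finset.mem_singleton] at hd2
      rw [Sg_eq_zero (by omega), map_zero, zero_mul])]
    rw [Finset.sum_pair (by norm_num)]
    rw [Sg_zero, Sg_one, map_one, one_mul, Nat.sub_zero, map_neg, map_one]
    ring
  rw [sub_mul, one_mul, hXG]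
  ring

lemma Gg_zero : Gg 0 = 1 := by
  simp [Gg, PF_zero, w, zzN_zero, Qs]

lemma Gg_eq (k : ℕ) : ∏ j ∈ Finset.Icc 1 k, Pm j = Gg k := by
  induction k with
  | zero => simp [Gg_zero]
  | succ k ih =>
    have hkey := key (k + 1) (by omega)
    simp only [Nat.add_sub_cancel] at hkey
    have hunit := one_sub_X_pow_mul_Pm (m := k + 1) (by omega)
    have : Gg (k + 1) = Pm (k + 1) * Gg k := by
      calc Gg (k + 1) = (Pm (k + 1) * (1 - (PowerSeries.X : PowerSeries ℚ) ^ (k + 1))) * Gg (k + 1) := by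
            rw [mul_comm (Pm (k+1)), hunit, one_mul]
        _ = Pm (k + 1) * ((1 - (PowerSeries.X : PowerSeries ℚ) ^ (k + 1)) * Gg (k + 1)) := by ring
        _ = Pm (k + 1) * Gg k := by rw [hkey]
    rw [Finset.prod_Icc_succ_top (by omega), ih, this, mul_comm]

lemma parts_toFinset_subset {k : ℕ} (P : Nat.Partition k) :
    P.parts.toFinset ⊆ Finset.Icc 1 k := by
  intro m hm
  rw [Multiset.mem_toFinset] at hm
  rw [Finset.mem_Icc]
  exact ⟨P.parts_pos hm, (Multiset.le_sum_of_mem hm).trans_eq P.parts_sum⟩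

lemma coeff_conversion {s : Multiset ℕ} {F : Finset ℕ} (hs : s.toFinset ⊆ F) :
    ∏ m ∈ F, ((m : ℚ) ^ (s.count m) * (Nat.factorial (s.count m) : ℚ)) = (zzN s : ℚ) := by
  rw [← Finset.prod_subset hs (fun m _ hm => by
    rw [Multiset.count_eq_zero_of_notMem (by simpa [Multiset.mem_toFinset] using hm)]
    simp)]
  rw [Finset.prod_mul_distrib, zzN]
  push_cast
  congr 1
  exact (Finset.prod_multiset_map_count s (Nat.cast : ℕ → ℚ)).symm

lemma Q_conversion {s : Multiset ℕ} {F : Finset ℕ} (hs : s.toFinset ⊆ F) :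
    ∏ m ∈ F, ((1 - (PowerSeries.X : PowerSeries ℚ) ^ m)⁻¹) ^ (s.count m) = Qs s := by
  rw [← Finset.prod_subset hs (fun m _ hm => by
    rw [Multiset.count_eq_zero_of_notMem (by simpa [Multiset.mem_toFinset] using hm)]
    simp)]
  rw [Qs, Finset.prod_multiset_map_count]
  rfl

end MacMahonAux

end MacMahonAux

open MacMahonAux in
theorem macmahon_partial_fractions (k : ℕ) (hk : 0 < k) :
    ∏ j ∈ Finset.Icc 1 k, (1 - (PowerSeries.X : PowerSeries ℚ) ^ j)⁻¹ =
      ∑ P : Nat.Partition k,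
        (PowerSeries.C (R := ℚ))
            (1 / ∏ m ∈ Finset.Icc 1 k,
              ((m : ℚ) ^ (P.parts.count m) * (Nat.factorial (P.parts.count m) : ℚ))) *
          ∏ m ∈ Finset.Icc 1 k,
            ((1 - (PowerSeries.X : PowerSeries ℚ) ^ m)⁻¹) ^ (P.parts.count m) := by
  have h := Gg_eq k
  rw [show (∏ j ∈ Finset.Icc 1 k, (1 - (PowerSeries.X : PowerSeries ℚ) ^ j)⁻¹)
      = ∏ j ∈ Finset.Icc 1 k, Pm j from rfl, h]
  rw [Gg, PF, Finset.sum_image (fun P _ Q _ h => Nat.Partition.ext h)]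
  apply Finset.sum_congr rfl
  intro P _
  rw [coeff_conversion (parts_toFinset_subset P), Q_conversion (parts_toFinset_subset P)]
  rw [one_div]
  rfl
end
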